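/- For each 0 ≤ p ≤ 4, the formal power series I_{p,p} ∈ ℚ[[z]] has positive radius of convergence (its coefficients grow at most geometrically); moreover its constant coefficient equals 1, so the associated holomorphic function takes the value 1 at z = 0. -/

import Mathlib

/-- `A_d(w) = (∏_{r=1}^{3d} (3w+r))² · ((∏_{r=1}^{d} (w+r))⁶)⁻¹ ∈ ℚ[[w]]`. -/
noncomputable def Acoef (d : ℕ) : PowerSeries ℚ :=
  (∏ r ∈ Finset.Icc 1 (3 * d), (3 * PowerSeries.X + (r : PowerSeries ℚ))) ^ 2 *
    ((∏ r ∈ Finset.Icc 1 d, (PowerSeries.X + (r : PowerSeries ℚ))) ^ 6)⁻¹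

/-- `Ĩ_q ∈ ℚ[[z]]`: the coefficient of `z^d` is the coefficient of `w^q` in `A_d(w)`. -/
noncomputable def Itil (q : ℕ) : PowerSeries ℚ :=
  PowerSeries.mk fun d => PowerSeries.coeff (R := ℚ) q (Acoef d)

/-- `S = (ℚ[[z]])[t]`. -/
abbrev S : Type := Polynomial (PowerSeries ℚ)

/-- The operator `z·∂/∂z` on `ℚ[[z]]`. -/
noncomputable def zdz (f : PowerSeries ℚ) : PowerSeries ℚ :=
  PowerSeries.mk fun n => (n : ℚ) * PowerSeries.coeff (R := ℚ) n f

/-- The derivation `δ = ∂/∂t + z·∂/∂z` on `S = (ℚ[[z]])[t]`, determined by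
`δ(t) = 1` and `δ(z) = z`. -/
noncomputable def deltaOp (p : S) : S :=
  Polynomial.derivative p + p.sum fun n a => Polynomial.C (zdz a) * Polynomial.X ^ n

/-- `I_{0,q} = Σ_{k=0}^{q} (t^k/k!)·Ĩ_{q−k} ∈ S`. -/
noncomputable def I0S (q : ℕ) : S :=
  ∑ k ∈ Finset.range (q + 1),
    Polynomial.C (PowerSeries.C (R := ℚ) (1 / (k.factorial : ℚ)) * Itil (q - k)) * Polynomial.X ^ k

/-- The recursion `I_{p,q} = δ(I_{p−1,q} · I_{p−1,p−1}⁻¹)`, where the inverse of the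
(constant, unit) polynomial `I_{p−1,p−1}` is taken via the power series inverse of its
constant coefficient. -/
noncomputable def IPQ : ℕ → ℕ → S
  | 0 => I0S
  | p + 1 => fun q => deltaOp (IPQ p q * Polynomial.C (((IPQ p p).coeff 0)⁻¹))



open PowerSeries Finset

/-- Geometric growth predicate for coefficients. -/
def Po (f : PowerSeries ℚ) : Prop :=
  ∃ C r : ℚ, 0 < C ∧ 0 < r ∧ ∀ n : ℕ, |PowerSeries.coeff (R := ℚ) n f| ≤ C * r ^ n

lemma Po_of_bound {f : PowerSeries ℚ} (C r : ℚ) (hC : 0 < C) (hr : 0 < r)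
    (h : ∀ n : ℕ, |PowerSeries.coeff (R := ℚ) n f| ≤ C * r ^ n) : Po f := ⟨C, r, hC, hr, h⟩

lemma Po_zero : Po 0 := ⟨1, 1, one_pos, one_pos, by simp⟩

lemma Po_C (c : ℚ) : Po (PowerSeries.C (R := ℚ) c) := by
  refine ⟨|c| + 1, 1, by positivity, one_pos, fun n => ?_⟩
  rw [PowerSeries.coeff_C]
  split <;> simp <;> nlinarith [abs_nonneg c]

lemma Po_one : Po 1 := by simpa using Po_C 1

lemma Po_add {f g : PowerSeries ℚ} (hf : Po f) (hg : Po g) : Po (f + g) := by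
  obtain ⟨C1, r1, hC1, hr1, h1⟩ := hf
  obtain ⟨C2, r2, hC2, hr2, h2⟩ := hg
  refine ⟨C1 + C2, max r1 r2, by positivity, lt_max_of_lt_left hr1, fun n => ?_⟩
  have e1 : r1 ^ n ≤ max r1 r2 ^ n := pow_le_pow_left₀ hr1.le (le_max_left _ _) n
  have e2 : r2 ^ n ≤ max r1 r2 ^ n := pow_le_pow_left₀ hr2.le (le_max_right _ _) n
  calc |PowerSeries.coeff (R := ℚ) n (f + g)| ≤ |PowerSeries.coeff (R := ℚ) n f| + |PowerSeries.coeff (R := ℚ) n g| := by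
        rw [map_add]; exact abs_add_le _ _
    _ ≤ C1 * r1 ^ n + C2 * r2 ^ n := add_le_add (h1 n) (h2 n)
    _ ≤ (C1 + C2) * max r1 r2 ^ n := by nlinarith

lemma nat_succ_le_two_pow (n : ℕ) : ((n : ℚ) + 1) ≤ 2 ^ n := by
  have := Nat.lt_two_pow_self (n := n)
  have : (n : ℚ) + 1 ≤ ((2 ^ n : ℕ) : ℚ) := by exact_mod_cast this
  simpa using this

lemma Po_mul {f g : PowerSeries ℚ} (hf : Po f) (hg : Po g) : Po (f * g) := by
  obtain ⟨C1, r1, hC1, hr1, h1⟩ := hf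
  obtain ⟨C2, r2, hC2, hr2, h2⟩ := hg
  set m := max r1 r2 with hm
  have hmpos : 0 < m := lt_max_of_lt_left hr1
  refine ⟨C1 * C2, 2 * m, by positivity, by positivity, fun n => ?_⟩
  rw [PowerSeries.coeff_mul]
  calc |∑ p ∈ antidiagonal n, PowerSeries.coeff (R := ℚ) p.1 f * PowerSeries.coeff (R := ℚ) p.2 g|
      ≤ ∑ p ∈ antidiagonal n, |PowerSeries.coeff (R := ℚ) p.1 f * PowerSeries.coeff (R := ℚ) p.2 g| :=
        Finset.abs_sum_le_sum_abs _ _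
    _ ≤ ∑ p ∈ antidiagonal n, C1 * C2 * m ^ n := by
        refine Finset.sum_le_sum fun p hp => ?_
        have hpn : p.1 + p.2 = n := Finset.HasAntidiagonal.mem_antidiagonal.mp hp
        rw [abs_mul]
        have e1 : r1 ^ p.1 ≤ m ^ p.1 := pow_le_pow_left₀ hr1.le (le_max_left _ _) _
        have e2 : r2 ^ p.2 ≤ m ^ p.2 := pow_le_pow_left₀ hr2.le (le_max_right _ _) _
        have : |PowerSeries.coeff (R := ℚ) p.1 f| * |PowerSeries.coeff (R := ℚ) p.2 g|
            ≤ (C1 * r1 ^ p.1) * (C2 * r2 ^ p.2) :=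
          mul_le_mul (h1 _) (h2 _) (abs_nonneg _) (by positivity)
        calc |PowerSeries.coeff (R := ℚ) p.1 f| * |PowerSeries.coeff (R := ℚ) p.2 g|
            ≤ (C1 * r1 ^ p.1) * (C2 * r2 ^ p.2) := this
          _ ≤ (C1 * m ^ p.1) * (C2 * m ^ p.2) := by
              have g1 : C1 * r1 ^ p.1 ≤ C1 * m ^ p.1 := mul_le_mul_of_nonneg_left e1 hC1.le
              have g2 : C2 * r2 ^ p.2 ≤ C2 * m ^ p.2 := mul_le_mul_of_nonneg_left e2 hC2.le
              exact mul_le_mul g1 g2 (by positivity) (by positivity)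
          _ = C1 * C2 * m ^ n := by rw [← hpn, pow_add]; ring
    _ = (n + 1 : ℚ) * (C1 * C2 * m ^ n) := by
        rw [Finset.sum_const, Finset.Nat.card_antidiagonal]; push_cast; ring
    _ ≤ C1 * C2 * (2 * m) ^ n := by
        have h2n := nat_succ_le_two_pow n
        have : (0:ℚ) < C1 * C2 * m ^ n := by positivity
        rw [mul_pow]
        nlinarith [pow_pos hmpos n, pow_pos (show (0:ℚ) < 2 by norm_num) n]

lemma Po_zdz {f : PowerSeries ℚ} (hf : Po f) : Po (PowerSeries.mk fun n => (n : ℚ) * PowerSeries.coeff (R := ℚ) n f) := by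
  obtain ⟨C, r, hC, hr, h⟩ := hf
  refine ⟨C, 2 * r, hC, by positivity, fun n => ?_⟩
  rw [PowerSeries.coeff_mk, abs_mul, abs_of_nonneg (by positivity : (0:ℚ) ≤ (n:ℚ))]
  have hn : (n : ℚ) ≤ 2 ^ n := by have := nat_succ_le_two_pow n; linarith
  calc (n:ℚ) * |PowerSeries.coeff (R := ℚ) n f| ≤ 2 ^ n * (C * r ^ n) := by
        have := abs_nonneg (PowerSeries.coeff (R := ℚ) n f)
        have hp := pow_pos hr n
        nlinarith [h n, pow_pos (show (0:ℚ)<2 by norm_num) n]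
    _ = C * (2 * r) ^ n := by rw [mul_pow]; ring

lemma Po_sum {α : Type*} (s : Finset α) (f : α → PowerSeries ℚ) (h : ∀ i ∈ s, Po (f i)) :
    Po (∑ i ∈ s, f i) := by
  classical
  induction s using Finset.induction_on with
  | empty => simpa using Po_zero
  | @insert a s' hni ih =>
      rw [Finset.sum_insert hni]
      exact Po_add (h a (Finset.mem_insert_self _ _)) (ih fun i hi => h i (Finset.mem_insert_of_mem hi))


lemma Po_inv_one {f : PowerSeries ℚ} (h1 : PowerSeries.constantCoeff (R := ℚ) f = 1)
    (C r : ℚ) (hC : 0 < C) (hr : 0 < r) (h : ∀ n : ℕ, |PowerSeries.coeff (R := ℚ) n f| ≤ C * r ^ n) :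
    Po f⁻¹ := by
  set s := r * (1 + C) with hs
  have hspos : 0 < s := by positivity
  have key : ∀ n, |PowerSeries.coeff (R := ℚ) n f⁻¹| ≤ s ^ n := by
    intro n
    induction n using Nat.strong_induction_on with
    | _ n ih =>
      rcases Nat.eq_zero_or_pos n with hn | hn
      · subst hn
        simp [PowerSeries.coeff_zero_eq_constantCoeff, PowerSeries.constantCoeff_inv, h1]
      · have e0 : PowerSeries.coeff (R := ℚ) n f⁻¹ =
            -1 * ∑ x ∈ antidiagonal n,
              if x.2 < n then PowerSeries.coeff (R := ℚ) x.1 f * PowerSeries.coeff (R := ℚ) x.2 f⁻¹ else 0 := by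
          rw [PowerSeries.coeff_inv, if_neg hn.ne', h1, inv_one]
        rw [e0, neg_one_mul, abs_neg, Finset.Nat.sum_antidiagonal_eq_sum_range_succ_mk]
        set g : ℕ → ℚ := fun k => if k = 0 then (0:ℚ) else C * r ^ k * s ^ (n - k) with hg
        have hb : ∀ k ∈ Finset.range (n+1),
            |if n - k < n then PowerSeries.coeff (R := ℚ) k f * PowerSeries.coeff (R := ℚ) (n-k) f⁻¹ else 0|
              ≤ g k := by
          intro k hk
          rcases Nat.eq_zero_or_pos k with hk0 | hk0
          · subst hk0
            simp [g, Nat.lt_irrefl]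
          · have hlt : n - k < n := Nat.sub_lt hn hk0
            rw [if_pos hlt, hg]
            simp only [hk0.ne', if_false]
            rw [abs_mul]
            exact mul_le_mul (h k) (ih _ hlt) (abs_nonneg _) (by positivity)
        set T := ∑ j ∈ Finset.range n, r ^ j * s ^ (n - 1 - j) with hT
        have G : T * (r - s) = r ^ n - s ^ n := geom_sum₂_mul r s n
        calc |∑ k ∈ Finset.range (n+1),
              if n - k < n then PowerSeries.coeff (R := ℚ) k f * PowerSeries.coeff (R := ℚ) (n-k) f⁻¹ else 0|
            ≤ ∑ k ∈ Finset.range (n+1),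
              |if n - k < n then PowerSeries.coeff (R := ℚ) k f * PowerSeries.coeff (R := ℚ) (n-k) f⁻¹ else 0| :=
              Finset.abs_sum_le_sum_abs _ _
          _ ≤ ∑ k ∈ Finset.range (n+1), g k := Finset.sum_le_sum hb
          _ = ∑ j ∈ Finset.range n, g (j+1) + g 0 := Finset.sum_range_succ' g n
          _ = C * r * T := by
              rw [hT, Finset.mul_sum]
              have hg0 : g 0 = 0 := by simp [hg]
              rw [hg0, add_zero]
              refine Finset.sum_congr rfl fun j hj => ?_
              have hnj : n - (j+1) = n - 1 - j := by omega
              simp only [hg, Nat.succ_ne_zero, if_false, hnj, pow_succ]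
              ring
          _ = s ^ n - r ^ n := by linear_combination (-1 : ℚ) * G + (-T) * hs
          _ ≤ s ^ n := by nlinarith [pow_pos hr n]
  have hinv0 : |PowerSeries.coeff (R := ℚ) 0 f⁻¹| ≤ 1 * s ^ 0 := by
    simpa using key 0
  exact Po_of_bound 1 s one_pos hspos (fun n => by simpa using key n)


def Bnd (F : PowerSeries ℚ) (M : ℚ) : Prop := ∀ j : ℕ, |PowerSeries.coeff (R := ℚ) j F| ≤ M

lemma Bnd_one : Bnd 1 1 := by
  intro j
  rw [PowerSeries.coeff_one]
  split <;> simp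

lemma Bnd_mul_lin {F : PowerSeries ℚ} {M : ℚ} (a b : ℚ) (ha : 0 ≤ a) (hb : 0 ≤ b)
    (hM : 0 ≤ M) (h : Bnd F M) :
    Bnd (F * (PowerSeries.C (R := ℚ) a * PowerSeries.X + PowerSeries.C (R := ℚ) b)) ((a + b) * M) := by
  intro j
  have e : F * (PowerSeries.C (R := ℚ) a * PowerSeries.X + PowerSeries.C (R := ℚ) b)
      = PowerSeries.C (R := ℚ) a * (F * PowerSeries.X) + PowerSeries.C (R := ℚ) b * F := by ring
  rw [e, map_add, PowerSeries.coeff_C_mul, PowerSeries.coeff_C_mul]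
  cases j with
  | zero =>
      rw [PowerSeries.coeff_zero_mul_X, mul_zero, zero_add, abs_mul, abs_of_nonneg hb]
      nlinarith [abs_nonneg (PowerSeries.coeff (R := ℚ) 0 F), h 0]
  | succ i =>
      rw [PowerSeries.coeff_succ_mul_X]
      have := abs_add_le (a * PowerSeries.coeff (R := ℚ) i F) (b * PowerSeries.coeff (R := ℚ) (i+1) F)
      rw [abs_mul, abs_mul, abs_of_nonneg ha, abs_of_nonneg hb] at this
      nlinarith [h i, h (i+1), abs_nonneg (PowerSeries.coeff (R := ℚ) i F),
        abs_nonneg (PowerSeries.coeff (R := ℚ) (i+1) F)]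

lemma Bnd_mul_lin_pow {F : PowerSeries ℚ} {M : ℚ} (a b : ℚ) (ha : 0 ≤ a) (hb : 0 ≤ b)
    (hM : 0 ≤ M) (h : Bnd F M) (k : ℕ) :
    Bnd (F * (PowerSeries.C (R := ℚ) a * PowerSeries.X + PowerSeries.C (R := ℚ) b) ^ k) ((a + b) ^ k * M) := by
  induction k with
  | zero => simpa using h
  | succ i ih =>
      have := Bnd_mul_lin a b ha hb (by positivity) ih
      have e : F * (PowerSeries.C (R := ℚ) a * PowerSeries.X + PowerSeries.C (R := ℚ) b) ^ (i+1)
          = F * (PowerSeries.C (R := ℚ) a * PowerSeries.X + PowerSeries.C (R := ℚ) b) ^ i *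
            (PowerSeries.C (R := ℚ) a * PowerSeries.X + PowerSeries.C (R := ℚ) b) := by ring
      have e2 : ((a + b) ^ (i+1) * M) = (a + b) * ((a + b) ^ i * M) := by ring
      rw [e, e2]
      exact this

lemma lin3_eq (r : ℕ) : 3 * PowerSeries.X + (r : PowerSeries ℚ)
    = PowerSeries.C (R := ℚ) 3 * PowerSeries.X + PowerSeries.C (R := ℚ) (r : ℚ) := by
  rw [map_natCast (PowerSeries.C (R := ℚ)) r, map_ofNat (PowerSeries.C (R := ℚ)) 3]

lemma lin1_eq (r : ℕ) : PowerSeries.X + (r : PowerSeries ℚ)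
    = PowerSeries.C (R := ℚ) 1 * PowerSeries.X + PowerSeries.C (R := ℚ) (r : ℚ) := by
  rw [map_natCast (PowerSeries.C (R := ℚ)) r, map_one, one_mul]

lemma Bnd_P2 (m : ℕ) :
    Bnd ((∏ r ∈ Finset.Icc 1 m, (3 * PowerSeries.X + (r : PowerSeries ℚ))) ^ 2)
      ((∏ r ∈ Finset.Icc 1 m, ((3 : ℚ) + r)) ^ 2) := by
  induction m with
  | zero => simpa using Bnd_one
  | succ i ih =>
      have hle : 1 ≤ i + 1 := by omega
      rw [Finset.prod_Icc_succ_top hle, Finset.prod_Icc_succ_top hle]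
      have hpos : (0:ℚ) ≤ (∏ r ∈ Finset.Icc 1 i, ((3 : ℚ) + r)) ^ 2 := by positivity
      have step := Bnd_mul_lin_pow (F := (∏ r ∈ Finset.Icc 1 i, (3 * PowerSeries.X + (r : PowerSeries ℚ))) ^ 2)
        3 ((i:ℚ)+1) (by norm_num) (by positivity) hpos ih 2
      have e : (∏ r ∈ Finset.Icc 1 i, (3 * PowerSeries.X + (r : PowerSeries ℚ))) ^ 2 *
          (PowerSeries.C (R := ℚ) 3 * PowerSeries.X + PowerSeries.C (R := ℚ) ((i:ℚ)+1)) ^ 2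
          = ((∏ r ∈ Finset.Icc 1 i, (3 * PowerSeries.X + (r : PowerSeries ℚ)))
              * (3 * PowerSeries.X + ((i+1 : ℕ) : PowerSeries ℚ))) ^ 2 := by
        rw [lin3_eq (i+1)]
        push_cast
        ring
      have e2 : ((3:ℚ) + ((i:ℚ)+1)) ^ 2 * (∏ r ∈ Finset.Icc 1 i, ((3 : ℚ) + r)) ^ 2
          = ((∏ r ∈ Finset.Icc 1 i, ((3 : ℚ) + r)) * ((3:ℚ) + ((i+1 : ℕ) : ℚ))) ^ 2 := by
        push_cast
        ring
      rw [e, e2] at step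
      exact step

lemma Bnd_Q6 (m : ℕ) :
    Bnd ((∏ r ∈ Finset.Icc 1 m, (PowerSeries.X + (r : PowerSeries ℚ))) ^ 6)
      ((∏ r ∈ Finset.Icc 1 m, ((1 : ℚ) + r)) ^ 6) := by
  induction m with
  | zero => simpa using Bnd_one
  | succ i ih =>
      have hle : 1 ≤ i + 1 := by omega
      rw [Finset.prod_Icc_succ_top hle, Finset.prod_Icc_succ_top hle]
      have hpos : (0:ℚ) ≤ (∏ r ∈ Finset.Icc 1 i, ((1 : ℚ) + r)) ^ 6 := by positivity
      have step := Bnd_mul_lin_pow (F := (∏ r ∈ Finset.Icc 1 i, (PowerSeries.X + (r : PowerSeries ℚ))) ^ 6)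
        1 ((i:ℚ)+1) (by norm_num) (by positivity) hpos ih 6
      have e : (∏ r ∈ Finset.Icc 1 i, (PowerSeries.X + (r : PowerSeries ℚ))) ^ 6 *
          (PowerSeries.C (R := ℚ) 1 * PowerSeries.X + PowerSeries.C (R := ℚ) ((i:ℚ)+1)) ^ 6
          = ((∏ r ∈ Finset.Icc 1 i, (PowerSeries.X + (r : PowerSeries ℚ)))
              * (PowerSeries.X + ((i+1 : ℕ) : PowerSeries ℚ))) ^ 6 := by
        rw [lin1_eq (i+1)]
        push_cast
        ring
      have e2 : ((1:ℚ) + ((i:ℚ)+1)) ^ 6 * (∏ r ∈ Finset.Icc 1 i, ((1 : ℚ) + r)) ^ 6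
          = ((∏ r ∈ Finset.Icc 1 i, ((1 : ℚ) + r)) * ((1:ℚ) + ((i+1 : ℕ) : ℚ))) ^ 6 := by
        push_cast
        ring
      rw [e, e2] at step
      exact step

lemma prodP_eq (m : ℕ) : (6:ℚ) * ∏ r ∈ Finset.Icc 1 m, ((3 : ℚ) + r) = ((m+3).factorial : ℚ) := by
  induction m with
  | zero => simp [Nat.factorial]
  | succ i ih =>
      rw [Finset.prod_Icc_succ_top (by omega : 1 ≤ i + 1)]
      have : (i+1+3).factorial = (i+3).factorial * (i+4) := by
        have : i+1+3 = (i+3)+1 := by omega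
        rw [this, Nat.factorial_succ]
        ring
      rw [this]
      push_cast
      nlinarith [ih]

lemma prodQ_eq (m : ℕ) : ∏ r ∈ Finset.Icc 1 m, ((1 : ℚ) + r) = ((m+1).factorial : ℚ) := by
  induction m with
  | zero => simp [Nat.factorial]
  | succ i ih =>
      rw [Finset.prod_Icc_succ_top (by omega : 1 ≤ i + 1)]
      have : (i+1+1).factorial = (i+1).factorial * (i+2) := by
        rw [Nat.factorial_succ]
        ring
      rw [this, ih]
      push_cast
      ring

lemma prodId_eq (m : ℕ) : ∏ r ∈ Finset.Icc 1 m, ((r:ℚ)) = (m.factorial : ℚ) := by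
  induction m with
  | zero => simp
  | succ i ih =>
      rw [Finset.prod_Icc_succ_top (by omega : 1 ≤ i + 1), ih, Nat.factorial_succ]
      push_cast
      ring

lemma fact3 (d : ℕ) : ((3*d).factorial : ℚ) ≤ 27 ^ d * ((d.factorial : ℚ)) ^ 3 := by
  induction d with
  | zero => simp
  | succ i ih =>
      have e : 3*(i+1) = (3*i+2)+1 := by omega
      have e1 : ((3*(i+1)).factorial : ℚ)
          = ((3*i).factorial : ℚ) * ((3*i+1) * (3*i+2) * (3*i+3)) := by
        rw [e]
        rw [Nat.factorial_succ, show 3*i+2 = (3*i+1)+1 by omega, Nat.factorial_succ,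
          show 3*i+1 = (3*i)+1 by omega, Nat.factorial_succ]
        push_cast
        ring
      have e2 : (((i+1).factorial : ℚ)) = (i.factorial : ℚ) * (i+1) := by
        rw [Nat.factorial_succ]; push_cast; ring
      have h1 : ((3*i+1) * (3*i+2) * (3*i+3) : ℚ) ≤ 27 * ((i:ℚ)+1)^3 := by nlinarith [sq_nonneg (i:ℚ)]
      have hf : (0:ℚ) < (i.factorial : ℚ) := by exact_mod_cast i.factorial_pos
      have h27 : (0:ℚ) < 27 ^ i := by positivity
      calc ((3*(i+1)).factorial : ℚ) = ((3*i).factorial : ℚ) * ((3*i+1) * (3*i+2) * (3*i+3)) := e1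
        _ ≤ (27 ^ i * ((i.factorial : ℚ)) ^ 3) * (27 * ((i:ℚ)+1)^3) := by
            have hfac : (0:ℚ) ≤ ((3*i).factorial : ℚ) := by positivity
            have hprod : (0:ℚ) ≤ ((3*i+1) * (3*i+2) * (3*i+3) : ℚ) := by positivity
            exact mul_le_mul ih h1 hprod (by positivity)
        _ = 27 ^ (i+1) * (((i+1).factorial : ℚ)) ^ 3 := by rw [e2]; ring

lemma Qd_const (d : ℕ) :
    PowerSeries.constantCoeff (R := ℚ) ((∏ r ∈ Finset.Icc 1 d, (PowerSeries.X + (r : PowerSeries ℚ))) ^ 6)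
      = ((d.factorial : ℚ)) ^ 6 := by
  rw [map_pow, map_prod]
  congr 1
  rw [← prodId_eq d]
  refine Finset.prod_congr rfl fun r hr => ?_
  rw [map_add, PowerSeries.constantCoeff_X, zero_add, map_natCast]

lemma keyA (d : ℕ) :
    Acoef d * (∏ r ∈ Finset.Icc 1 d, (PowerSeries.X + (r : PowerSeries ℚ))) ^ 6
      = (∏ r ∈ Finset.Icc 1 (3*d), (3 * PowerSeries.X + (r : PowerSeries ℚ))) ^ 2 := by
  have hne : PowerSeries.constantCoeff (R := ℚ)
      ((∏ r ∈ Finset.Icc 1 d, (PowerSeries.X + (r : PowerSeries ℚ))) ^ 6) ≠ 0 := by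
    rw [Qd_const]
    have : (0:ℚ) < ((d.factorial : ℚ)) ^ 6 := by
      have : (0:ℚ) < (d.factorial : ℚ) := by exact_mod_cast d.factorial_pos
      positivity
    exact this.ne'
  rw [Acoef, mul_assoc]
  have hc : ((∏ r ∈ Finset.Icc 1 d, (PowerSeries.X + (r : PowerSeries ℚ))) ^ 6)⁻¹ *
      (∏ r ∈ Finset.Icc 1 d, (PowerSeries.X + (r : PowerSeries ℚ))) ^ 6 = 1 := by
    rw [mul_comm]
    exact PowerSeries.mul_inv_cancel _ hne
  rw [hc, mul_one]

lemma Abound (d : ℕ) : ∀ q : ℕ, q ≤ 4 →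
    |PowerSeries.coeff (R := ℚ) q (Acoef d)| * ((d.factorial : ℚ)) ^ 6
      ≤ ((3*d+3).factorial : ℚ) ^ 2 * ((2*((d:ℚ)+1)) ^ 6) ^ q := by
  intro q
  induction q using Nat.strong_induction_on with
  | _ q ih =>
    intro hq4
    set D : ℚ := ((d.factorial : ℚ)) ^ 6 with hD
    set F : ℚ := ((3*d+3).factorial : ℚ) with hF
    set E : ℚ := (2*((d:ℚ)+1)) ^ 6 with hE
    have hDpos : 0 < D := by
      have : (0:ℚ) < (d.factorial : ℚ) := by exact_mod_cast d.factorial_pos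
      positivity
    have hF1 : (1:ℚ) ≤ F := by
      have := (3*d+3).factorial_pos
      rw [hF]
      exact_mod_cast this
    have hd1 : (1:ℚ) ≤ ((d:ℚ)+1) ^ 6 := by
      have : (1:ℚ) ≤ (d:ℚ)+1 := by
        have : (0:ℚ) ≤ (d:ℚ) := by positivity
        linarith
      calc (1:ℚ) = 1 ^ 6 := by norm_num
        _ ≤ ((d:ℚ)+1) ^ 6 := by gcongr
    have hE1 : (1:ℚ) ≤ E := by
      rw [hE]
      calc (1:ℚ) = 1 ^ 6 := by norm_num
        _ ≤ (2*((d:ℚ)+1)) ^ 6 := by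
            gcongr
            have : (0:ℚ) ≤ (d:ℚ) := by positivity
            linarith
    -- the key coefficient identity
    have key := congrArg (PowerSeries.coeff (R := ℚ) q) (keyA d)
    rw [PowerSeries.coeff_mul, Finset.Nat.sum_antidiagonal_eq_sum_range_succ_mk,
      Finset.sum_range_succ, Nat.sub_self] at key
    have w0 : PowerSeries.coeff (R := ℚ) 0 ((∏ r ∈ Finset.Icc 1 d, (PowerSeries.X + (r : PowerSeries ℚ))) ^ 6) = D := by
      rw [PowerSeries.coeff_zero_eq_constantCoeff, Qd_const]
    rw [w0] at key
    -- bound on p_q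
    have hP : |PowerSeries.coeff (R := ℚ) q ((∏ r ∈ Finset.Icc 1 (3*d), (3 * PowerSeries.X + (r : PowerSeries ℚ))) ^ 2)| ≤ F ^ 2 := by
      have hb := Bnd_P2 (3*d) q
      have hprod : (6:ℚ) * ∏ r ∈ Finset.Icc 1 (3*d), ((3 : ℚ) + r) = F := by
        rw [hF]
        exact_mod_cast prodP_eq (3*d)
      have hprodnn : (0:ℚ) ≤ ∏ r ∈ Finset.Icc 1 (3*d), ((3 : ℚ) + r) := by
        apply Finset.prod_nonneg
        intro r hr
        positivity
      nlinarith [hb]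
    -- bound on w_j
    have hW : ∀ j : ℕ, |PowerSeries.coeff (R := ℚ) j ((∏ r ∈ Finset.Icc 1 d, (PowerSeries.X + (r : PowerSeries ℚ))) ^ 6)|
        ≤ ((d:ℚ)+1) ^ 6 * D := by
      intro j
      have hb := Bnd_Q6 d j
      have hprod : ∏ r ∈ Finset.Icc 1 d, ((1 : ℚ) + r) = ((d+1).factorial : ℚ) := prodQ_eq d
      rw [hprod] at hb
      have e : (((d+1).factorial : ℚ)) ^ 6 = ((d:ℚ)+1) ^ 6 * D := by
        rw [hD, Nat.factorial_succ]
        push_cast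
        ring
      rw [e] at hb
      exact hb
    -- from key : ∑ + a_q * D = p_q
    have habs : |PowerSeries.coeff (R := ℚ) q (Acoef d)| * D
        ≤ F ^ 2 + ∑ k ∈ Finset.range q,
            |PowerSeries.coeff (R := ℚ) k (Acoef d)| * (((d:ℚ)+1) ^ 6 * D) := by
      have e1 : PowerSeries.coeff (R := ℚ) q (Acoef d) * D
          = PowerSeries.coeff (R := ℚ) q ((∏ r ∈ Finset.Icc 1 (3*d), (3 * PowerSeries.X + (r : PowerSeries ℚ))) ^ 2)
            - ∑ k ∈ Finset.range q, PowerSeries.coeff (R := ℚ) k (Acoef d) *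
              PowerSeries.coeff (R := ℚ) (q-k) ((∏ r ∈ Finset.Icc 1 d, (PowerSeries.X + (r : PowerSeries ℚ))) ^ 6) := by
        linarith [key]
      have e2 : |PowerSeries.coeff (R := ℚ) q (Acoef d)| * D = |PowerSeries.coeff (R := ℚ) q (Acoef d) * D| := by
        rw [abs_mul, abs_of_pos hDpos]
      rw [e2, e1]
      have hS : |∑ k ∈ Finset.range q, PowerSeries.coeff (R := ℚ) k (Acoef d) *
              PowerSeries.coeff (R := ℚ) (q-k) ((∏ r ∈ Finset.Icc 1 d, (PowerSeries.X + (r : PowerSeries ℚ))) ^ 6)|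
          ≤ ∑ k ∈ Finset.range q, |PowerSeries.coeff (R := ℚ) k (Acoef d)| * (((d:ℚ)+1) ^ 6 * D) := by
        calc |∑ k ∈ Finset.range q, PowerSeries.coeff (R := ℚ) k (Acoef d) *
              PowerSeries.coeff (R := ℚ) (q-k) ((∏ r ∈ Finset.Icc 1 d, (PowerSeries.X + (r : PowerSeries ℚ))) ^ 6)|
            ≤ ∑ k ∈ Finset.range q, |PowerSeries.coeff (R := ℚ) k (Acoef d) *
              PowerSeries.coeff (R := ℚ) (q-k) ((∏ r ∈ Finset.Icc 1 d, (PowerSeries.X + (r : PowerSeries ℚ))) ^ 6)| :=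
              Finset.abs_sum_le_sum_abs _ _
          _ ≤ ∑ k ∈ Finset.range q, |PowerSeries.coeff (R := ℚ) k (Acoef d)| * (((d:ℚ)+1) ^ 6 * D) := by
              refine Finset.sum_le_sum fun k hk => ?_
              rw [abs_mul]
              exact mul_le_mul_of_nonneg_left (hW (q-k)) (abs_nonneg _)
      calc |_ - _| ≤ |PowerSeries.coeff (R := ℚ) q ((∏ r ∈ Finset.Icc 1 (3*d), (3 * PowerSeries.X + (r : PowerSeries ℚ))) ^ 2)|
            + |∑ k ∈ Finset.range q, PowerSeries.coeff (R := ℚ) k (Acoef d) *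
              PowerSeries.coeff (R := ℚ) (q-k) ((∏ r ∈ Finset.Icc 1 d, (PowerSeries.X + (r : PowerSeries ℚ))) ^ 6)| :=
            abs_sub _ _
        _ ≤ F ^ 2 + ∑ k ∈ Finset.range q,
            |PowerSeries.coeff (R := ℚ) k (Acoef d)| * (((d:ℚ)+1) ^ 6 * D) := add_le_add hP hS
    -- now close by cases on q
    match q, hq4 with
    | 0, _ => simpa using habs
    | (Nat.succ q'), hq4 =>
      have hsum : ∑ k ∈ Finset.range (q'+1),
          |PowerSeries.coeff (R := ℚ) k (Acoef d)| * (((d:ℚ)+1) ^ 6 * D)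
          ≤ ((q':ℚ)+1) * (F ^ 2 * E ^ q' * (((d:ℚ)+1) ^ 6)) := by
        have step : ∀ k ∈ Finset.range (q'+1),
            |PowerSeries.coeff (R := ℚ) k (Acoef d)| * (((d:ℚ)+1) ^ 6 * D)
            ≤ F ^ 2 * E ^ q' * (((d:ℚ)+1) ^ 6) := by
          intro k hk
          have hkq : k < q'+1 := Finset.mem_range.mp hk
          have ihk := ih k (by omega) (by omega)
          have hEk : E ^ k ≤ E ^ q' := pow_le_pow_right₀ hE1 (by omega)
          calc |PowerSeries.coeff (R := ℚ) k (Acoef d)| * (((d:ℚ)+1) ^ 6 * D)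
              = (|PowerSeries.coeff (R := ℚ) k (Acoef d)| * D) * (((d:ℚ)+1) ^ 6) := by ring
            _ ≤ (F ^ 2 * E ^ k) * (((d:ℚ)+1) ^ 6) := by
                apply mul_le_mul_of_nonneg_right ihk
                positivity
            _ ≤ F ^ 2 * E ^ q' * (((d:ℚ)+1) ^ 6) := by
                apply mul_le_mul_of_nonneg_right _ (by positivity)
                apply mul_le_mul_of_nonneg_left hEk (by positivity)
        calc ∑ k ∈ Finset.range (q'+1), |PowerSeries.coeff (R := ℚ) k (Acoef d)| * (((d:ℚ)+1) ^ 6 * D)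
            ≤ ∑ _k ∈ Finset.range (q'+1), F ^ 2 * E ^ q' * (((d:ℚ)+1) ^ 6) :=
              Finset.sum_le_sum step
          _ = ((q':ℚ)+1) * (F ^ 2 * E ^ q' * (((d:ℚ)+1) ^ 6)) := by
              rw [Finset.sum_const, Finset.card_range, nsmul_eq_mul]
              push_cast
              ring
      have hqr : ((q':ℚ)+1) ≤ 4 := by exact_mod_cast hq4
      have hEq' : (1:ℚ) ≤ E ^ q' := one_le_pow₀ hE1
      have hgoal : F ^ 2 + ((q':ℚ)+1) * (F ^ 2 * E ^ q' * (((d:ℚ)+1) ^ 6)) ≤ F ^ 2 * E ^ (q'+1) := by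
        have hE64 : E = 64 * ((d:ℚ)+1) ^ 6 := by rw [hE]; ring
        rw [pow_succ E q']
        have h1 : (1:ℚ) ≤ E ^ q' * (((d:ℚ)+1) ^ 6) := by nlinarith [hEq', hd1]
        have hF2 : (0:ℚ) ≤ F ^ 2 := sq_nonneg F
        have hX : F ^ 2 ≤ F ^ 2 * (E ^ q' * (((d:ℚ)+1) ^ 6)) := by nlinarith [h1, hF2]
        have hYnn : (0:ℚ) ≤ F ^ 2 * E ^ q' * (((d:ℚ)+1) ^ 6) := by positivity
        have hEE : F ^ 2 * (E ^ q' * E) = 64 * (F ^ 2 * E ^ q' * (((d:ℚ)+1) ^ 6)) := by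
          rw [hE64]; ring
        nlinarith [hX, mul_le_mul_of_nonneg_right hqr hYnn, hYnn, hEE]
      calc |PowerSeries.coeff (R := ℚ) (q'+1) (Acoef d)| * D
          ≤ F ^ 2 + ∑ k ∈ Finset.range (q'+1),
            |PowerSeries.coeff (R := ℚ) k (Acoef d)| * (((d:ℚ)+1) ^ 6 * D) := habs
        _ ≤ F ^ 2 + ((q':ℚ)+1) * (F ^ 2 * E ^ q' * (((d:ℚ)+1) ^ 6)) := by linarith [hsum]
        _ ≤ F ^ 2 * E ^ (q'+1) := hgoal

lemma Po_Itil (q : ℕ) (hq : q ≤ 4) : Po (Itil q) := by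
  refine Po_of_bound (729 * 2^54) (729 * 2^30) (by positivity) (by positivity) fun d => ?_
  rw [Itil, PowerSeries.coeff_mk]
  set D : ℚ := ((d.factorial : ℚ)) ^ 6 with hD
  set F : ℚ := ((3*d+3).factorial : ℚ) with hF
  set E : ℚ := (2*((d:ℚ)+1)) ^ 6 with hE
  have hDpos : 0 < D := by
    have : (0:ℚ) < (d.factorial : ℚ) := by exact_mod_cast d.factorial_pos
    positivity
  have hdnn : (0:ℚ) ≤ (d:ℚ) := by positivity
  have hE1 : (1:ℚ) ≤ E := by
    rw [hE]
    calc (1:ℚ) = 1 ^ 6 := by norm_num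
      _ ≤ (2*((d:ℚ)+1)) ^ 6 := by gcongr; linarith
  have h1 := Abound d q hq
  have hEq : E ^ q ≤ E ^ 4 := pow_le_pow_right₀ hE1 hq
  have hFnn : (0:ℚ) ≤ F := by rw [hF]; positivity
  have h2 : |PowerSeries.coeff (R := ℚ) q (Acoef d)| * D ≤ F ^ 2 * E ^ 4 := by
    calc |PowerSeries.coeff (R := ℚ) q (Acoef d)| * D ≤ F ^ 2 * E ^ q := h1
      _ ≤ F ^ 2 * E ^ 4 := by
          apply mul_le_mul_of_nonneg_left hEq
          positivity
  have hF3 : F ≤ 27 ^ (d+1) * (((d+1).factorial : ℚ)) ^ 3 := by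
    have := fact3 (d+1)
    rw [show 3*(d+1) = 3*d+3 by ring] at this
    exact this
  have hFsq : F ^ 2 ≤ 729 ^ (d+1) * (((d+1).factorial : ℚ)) ^ 6 := by
    have := pow_le_pow_left₀ hFnn hF3 2
    have e27 : ((27:ℚ) ^ (d+1)) ^ 2 = 729 ^ (d+1) := by
      rw [← pow_mul, mul_comm (d+1) 2, pow_mul]
      norm_num
    calc F ^ 2 ≤ (27 ^ (d+1) * (((d+1).factorial : ℚ)) ^ 3) ^ 2 := this
      _ = ((27:ℚ) ^ (d+1)) ^ 2 * (((d+1).factorial : ℚ)) ^ 6 := by ring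
      _ = 729 ^ (d+1) * (((d+1).factorial : ℚ)) ^ 6 := by rw [e27]
  have hfct : (((d+1).factorial : ℚ)) ^ 6 = ((d:ℚ)+1) ^ 6 * D := by
    rw [hD, Nat.factorial_succ]
    push_cast
    ring
  have hE4 : E ^ 4 = 2 ^ 24 * ((d:ℚ)+1) ^ 24 := by
    rw [hE, ← pow_mul, mul_pow]
  have h3 : |PowerSeries.coeff (R := ℚ) q (Acoef d)| * D
      ≤ (729 ^ (d+1) * 2 ^ 24 * ((d:ℚ)+1) ^ 30) * D := by
    calc |PowerSeries.coeff (R := ℚ) q (Acoef d)| * D ≤ F ^ 2 * E ^ 4 := h2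
      _ ≤ (729 ^ (d+1) * (((d+1).factorial : ℚ)) ^ 6) * E ^ 4 := by
          apply mul_le_mul_of_nonneg_right hFsq
          positivity
      _ = (729 ^ (d+1) * 2 ^ 24 * ((d:ℚ)+1) ^ 30) * D := by
          rw [hfct, hE4]
          ring
  have h4 : |PowerSeries.coeff (R := ℚ) q (Acoef d)| ≤ 729 ^ (d+1) * 2 ^ 24 * ((d:ℚ)+1) ^ 30 :=
    le_of_mul_le_mul_right h3 hDpos
  have hdp : ((d:ℚ)+1) ≤ 2 ^ (d+1) := by
    have h := Nat.lt_two_pow_self (n := d)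
    have : ((d:ℚ)) + 1 ≤ ((2^d : ℕ) : ℚ) := by exact_mod_cast h
    calc ((d:ℚ)+1) ≤ ((2^d : ℕ) : ℚ) := this
      _ = 2 ^ d := by push_cast; ring
      _ ≤ 2 ^ (d+1) := by
          apply pow_le_pow_right₀ (by norm_num)
          omega
  have hdp30 : ((d:ℚ)+1) ^ 30 ≤ (2:ℚ) ^ ((d+1)*30) := by
    calc ((d:ℚ)+1) ^ 30 ≤ ((2:ℚ) ^ (d+1)) ^ 30 := pow_le_pow_left₀ (by linarith) hdp 30
      _ = (2:ℚ) ^ ((d+1)*30) := by rw [← pow_mul]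
  calc |PowerSeries.coeff (R := ℚ) q (Acoef d)| ≤ 729 ^ (d+1) * 2 ^ 24 * ((d:ℚ)+1) ^ 30 := h4
    _ ≤ 729 ^ (d+1) * 2 ^ 24 * (2:ℚ) ^ ((d+1)*30) := by
        apply mul_le_mul_of_nonneg_left hdp30
        positivity
    _ = 729 * 2^54 * (729 * 2^30) ^ d := by
        have hsplit : ((729 * 2^30 : ℚ)) ^ d = 729 ^ d * 2 ^ (30*d) := by
          rw [mul_pow, ← pow_mul]
        rw [hsplit]
        ring

-- ## Polynomial-level machinery

def PoPoly (p : S) : Prop := ∀ n : ℕ, Po (p.coeff n)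

lemma zdz_zero : zdz 0 = 0 := by
  ext n
  simp [zdz]

lemma Po_zdz' {f : PowerSeries ℚ} (hf : Po f) : Po (zdz f) := by
  rw [zdz]
  exact Po_zdz hf

lemma coeff_deltaSum (p : S) (n : ℕ) :
    (p.sum fun k a => Polynomial.C (zdz a) * Polynomial.X ^ k).coeff n = zdz (p.coeff n) := by
  classical
  rw [Polynomial.sum_def, Polynomial.finset_sum_coeff]
  simp only [Polynomial.coeff_C_mul, Polynomial.coeff_X_pow, mul_ite, mul_one, mul_zero]
  rw [Finset.sum_ite_eq p.support n (fun k => zdz (p.coeff k))]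
  split
  · rfl
  · next h =>
      rw [Polynomial.notMem_support_iff.mp h, zdz_zero]

lemma PoPoly_deltaOp {p : S} (h : PoPoly p) : PoPoly (deltaOp p) := by
  intro n
  rw [deltaOp, Polynomial.coeff_add, Polynomial.coeff_derivative, coeff_deltaSum]
  refine Po_add (Po_mul (h (n+1)) ?_) (Po_zdz' (h n))
  have e : ((n : PowerSeries ℚ) + 1) = PowerSeries.C (R := ℚ) ((n:ℚ)+1) := by
    rw [map_add, map_natCast, map_one]
  rw [e]
  exact Po_C _

lemma PoPoly_mul {p q : S} (hp : PoPoly p) (hq : PoPoly q) : PoPoly (p * q) := by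
  intro n
  rw [Polynomial.coeff_mul]
  exact Po_sum _ _ fun x hx => Po_mul (hp x.1) (hq x.2)

lemma PoPoly_C {f : PowerSeries ℚ} (hf : Po f) : PoPoly (Polynomial.C f) := by
  intro n
  rw [Polynomial.coeff_C]
  split
  · exact hf
  · exact Po_zero

lemma PoPoly_I0S (q : ℕ) (hq : q ≤ 4) : PoPoly (I0S q) := by
  intro n
  rw [I0S, Polynomial.finset_sum_coeff]
  refine Po_sum _ _ fun k hk => ?_
  rw [Polynomial.coeff_C_mul, Polynomial.coeff_X_pow]
  split
  · rw [mul_one]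
    exact Po_mul (Po_C _) (Po_Itil _ (by omega))
  · rw [mul_zero]
    exact Po_zero

-- ## The reduction mod z (constant coefficient map)

lemma Acoef_zero : Acoef 0 = 1 := by
  rw [Acoef]
  have h0 : Finset.Icc 1 0 = (∅ : Finset ℕ) := rfl
  rw [mul_zero, h0, Finset.prod_empty, Finset.prod_empty, one_pow, one_pow]
  have : (1 : PowerSeries ℚ) * (1 : PowerSeries ℚ)⁻¹ = 1 :=
    PowerSeries.mul_inv_cancel _ (by simp)
  simpa using this

lemma cc_Itil (j : ℕ) : PowerSeries.constantCoeff (R := ℚ) (Itil j) = if j = 0 then 1 else 0 := by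
  rw [Itil, ← PowerSeries.coeff_zero_eq_constantCoeff, PowerSeries.coeff_mk, Acoef_zero,
    PowerSeries.coeff_one]

lemma phi_deltaOp (p : S) :
    (deltaOp p).map (PowerSeries.constantCoeff (R := ℚ))
      = Polynomial.derivative (p.map (PowerSeries.constantCoeff (R := ℚ))) := by
  rw [deltaOp, Polynomial.map_add, ← Polynomial.derivative_map]
  suffices h : ((p.sum fun n a => Polynomial.C (zdz a) * Polynomial.X ^ n).map
      (PowerSeries.constantCoeff (R := ℚ))) = 0 by
    rw [h, add_zero]
  rw [Polynomial.sum_def, Polynomial.map_sum]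
  refine Finset.sum_eq_zero fun k hk => ?_
  rw [Polynomial.map_mul, Polynomial.map_C, Polynomial.map_pow, Polynomial.map_X]
  have : PowerSeries.constantCoeff (R := ℚ) (zdz (p.coeff k)) = 0 := by
    rw [← PowerSeries.coeff_zero_eq_constantCoeff, zdz, PowerSeries.coeff_mk]
    simp
  rw [this, map_zero, zero_mul]

lemma phi_IPQ : ∀ p q : ℕ, p ≤ q →
    (IPQ p q).map (PowerSeries.constantCoeff (R := ℚ))
      = Polynomial.C ((1:ℚ) / (q-p).factorial) * Polynomial.X ^ (q-p) := by
  intro p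
  induction p with
  | zero =>
      intro q _
      show (I0S q).map _ = _
      rw [I0S, Polynomial.map_sum]
      rw [Finset.sum_eq_single q]
      · rw [Polynomial.map_mul, Polynomial.map_C, Polynomial.map_pow, Polynomial.map_X,
          map_mul, PowerSeries.constantCoeff_C, cc_Itil, Nat.sub_self, if_pos rfl, mul_one,
          Nat.sub_zero]
      · intro k hk hkq
        have hklt : k < q + 1 := Finset.mem_range.mp hk
        have : q - k ≠ 0 := by omega
        rw [Polynomial.map_mul, Polynomial.map_C, map_mul, PowerSeries.constantCoeff_C,
          cc_Itil, if_neg this, mul_zero, Polynomial.C_0, zero_mul]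
      · intro h
        exact absurd (Finset.self_mem_range_succ q) h
  | succ p ih =>
      intro q hpq
      show (deltaOp (IPQ p q * Polynomial.C (((IPQ p p).coeff 0)⁻¹))).map _ = _
      rw [phi_deltaOp, Polynomial.map_mul, Polynomial.map_C, PowerSeries.constantCoeff_inv]
      have hpp := ih p le_rfl
      have hcc : PowerSeries.constantCoeff (R := ℚ) ((IPQ p p).coeff 0) = 1 := by
        have h0 : ((IPQ p p).map (PowerSeries.constantCoeff (R := ℚ))).coeff 0 = 1 := by
          rw [hpp, Nat.sub_self]
          simp [Nat.factorial]
        rw [Polynomial.coeff_map] at h0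
        exact h0
      rw [hcc, inv_one, Polynomial.C_1, mul_one, ih q (by omega)]
      set m := q - (p+1) with hmdef
      have hm : q - p = m + 1 := by omega
      rw [hm, Polynomial.derivative_C_mul_X_pow]
      have e1 : (1 / (((m+1).factorial : ℕ) : ℚ)) * (((m+1 : ℕ)) : ℚ) = 1 / ((m.factorial : ℕ) : ℚ) := by
        rw [Nat.factorial_succ]
        have h1 : ((m.factorial : ℕ) : ℚ) ≠ 0 := by exact_mod_cast m.factorial_pos.ne'
        have h2 : ((m:ℚ) + 1) ≠ 0 := by positivity
        push_cast
        field_simp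
      rw [e1]
      norm_num

-- constant coefficient of the diagonal is 1
lemma cc_IPQ_diag (p : ℕ) : PowerSeries.constantCoeff (R := ℚ) ((IPQ p p).coeff 0) = 1 := by
  have h0 : ((IPQ p p).map (PowerSeries.constantCoeff (R := ℚ))).coeff 0 = 1 := by
    rw [phi_IPQ p p le_rfl, Nat.sub_self]
    simp [Nat.factorial]
  rw [Polynomial.coeff_map] at h0
  exact h0

lemma PoPoly_IPQ : ∀ p : ℕ, p ≤ 4 → ∀ q : ℕ, q ≤ 4 → PoPoly (IPQ p q) := by
  intro p
  induction p with
  | zero => intro _ q hq; exact PoPoly_I0S q hq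
  | succ p ih =>
      intro hp4 q hq4
      show PoPoly (deltaOp (IPQ p q * Polynomial.C (((IPQ p p).coeff 0)⁻¹)))
      apply PoPoly_deltaOp
      apply PoPoly_mul (ih (by omega) q hq4)
      apply PoPoly_C
      obtain ⟨C, r, hC, hr, h⟩ := ih (by omega) p (by omega) 0
      exact Po_inv_one (cc_IPQ_diag p) C r hC hr h

/-- For each `0 ≤ p ≤ 4`, the power series `I_{p,p} ∈ ℚ[[z]]` has positive radius of
convergence (its coefficients grow at most geometrically), and its constant coefficient
equals `1`, so the associated holomorphic function takes the value `1` at `z = 0`. -/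
theorem IPQ_diagonal_converges :
    ∀ p ≤ 4,
      (∃ C r : ℝ, 0 < C ∧ 0 < r ∧
        ∀ n : ℕ, |((PowerSeries.coeff (R := ℚ) n ((IPQ p p).coeff 0) : ℚ) : ℝ)| ≤ C * r ^ n) ∧
      PowerSeries.constantCoeff (R := ℚ) ((IPQ p p).coeff 0) = 1 := by
  intro p hp
  refine ⟨?_, cc_IPQ_diag p⟩
  obtain ⟨C, r, hC, hr, h⟩ := PoPoly_IPQ p hp p hp 0
  refine ⟨(C : ℝ), (r : ℝ), by exact_mod_cast hC, by exact_mod_cast hr, fun n => ?_⟩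
  have := h n
  push_cast
  exact_mod_cast this
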